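/- Let X be a real vector space equipped with the core convex topology τ_c. Then (X, τ_c) has the Heine–Borel property: every subset of X that is τ_c-closed and von Neumann bounded in (X, τ_c) is τ_c-compact. Moreover, every τ_c-compact subset of X is contained in a finite-dimensional linear subspace of X. -/

import Mathlib

open Pointwise

/-- Algebraic interior (core) of a set `A` in a real vector space:
`cor A = {x ∈ A | ∀ d, ∃ δ > 0, ∀ λ ∈ [0, δ], x + λ • d ∈ A}`. -/
def cor {X : Type*} [AddCommGroup X] [Module ℝ X] (A : Set X) : Set X :=
  {x | x ∈ A ∧ ∀ d : X, ∃ δ : ℝ, 0 < δ ∧ ∀ lam ∈ Set.Icc (0 : ℝ) δ, x + lam • d ∈ A}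

/-- Relative algebraic interior of `A`: directions are taken in `L(A) = span (A - A)`. -/
def icr {X : Type*} [AddCommGroup X] [Module ℝ X] (A : Set X) : Set X :=
  {x | x ∈ A ∧ ∀ d ∈ Submodule.span ℝ (A - A),
    ∃ δ : ℝ, 0 < δ ∧ ∀ lam ∈ Set.Icc (0 : ℝ) δ, x + lam • d ∈ A}

/-- Vectorial closure of `A`:
`vcl A = {b | ∃ d, ∀ δ > 0, ∃ λ ∈ [0, δ], b + λ • d ∈ A}`. -/
def vcl {X : Type*} [AddCommGroup X] [Module ℝ X] (A : Set X) : Set X :=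
  {b | ∃ d : X, ∀ δ : ℝ, 0 < δ → ∃ lam ∈ Set.Icc (0 : ℝ) δ, b + lam • d ∈ A}

/-- The core convex topology `τ_c`: the topology whose open sets are the unions of
members of `𝔅 = {A | A convex and cor A = A}`; since `𝔅` is a topological basis
(closed under binary intersection, contains `X` and `∅`), this is the topology
generated by `𝔅`. -/
def tauc (X : Type*) [AddCommGroup X] [Module ℝ X] : TopologicalSpace X :=
  TopologicalSpace.generateFrom {A : Set X | Convex ℝ A ∧ cor A = A}


section HeineBorelAux

/-- A convex set in `Fin m → ℝ` that equals its algebraic core is open. -/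
lemma core_isOpen {m : ℕ} {B : Set (Fin m → ℝ)} (hB : Convex ℝ B)
    (hcore : ∀ x ∈ B, ∀ d : Fin m → ℝ, ∃ δ : ℝ, 0 < δ ∧
      ∀ lam ∈ Set.Icc (0:ℝ) δ, x + lam • d ∈ B) : IsOpen B := by
  rw [Metric.isOpen_iff]
  intro x hx
  choose δp hδp hmemp using fun i => hcore x hx (Pi.single i 1)
  choose δn hδn hmemn using fun i => hcore x hx (-(Pi.single i 1))
  rcases Nat.eq_zero_or_pos m with hm | hm
  · subst hm
    exact ⟨1, one_pos, fun y _ => by rwa [Subsingleton.elim y x]⟩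
  have hne : Nonempty (Fin m) := ⟨⟨0, hm⟩⟩
  set δ : Fin m → ℝ := fun i => min (δp i) (δn i) with hδdef
  have hδpos : ∀ i, 0 < δ i := fun i => lt_min (hδp i) (hδn i)
  have hmpos : (0:ℝ) < m := by exact_mod_cast hm
  set ε : ℝ := (Finset.univ.inf' Finset.univ_nonempty δ) / m with hεdef
  have hεpos : 0 < ε := by
    apply div_pos _ hmpos
    rw [Finset.lt_inf'_iff]
    exact fun i _ => hδpos i
  have hεle : ∀ i, ε ≤ δ i / m :=
    fun i => div_le_div_of_nonneg_right (Finset.inf'_le _ (Finset.mem_univ i)) hmpos.le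
  refine ⟨ε, hεpos, fun y hy => ?_⟩
  rw [Metric.mem_ball] at hy
  have hyi : ∀ i, |y i - x i| ≤ δ i / m := by
    intro i
    have h1 : dist (y i) (x i) ≤ dist y x := dist_le_pi_dist y x i
    have h2 := (h1.trans_lt hy).le.trans (hεle i)
    simpa [Real.dist_eq] using h2
  set t : Fin m → ℝ := fun i => |y i - x i| / δ i with htdef
  have htnonneg : ∀ i, 0 ≤ t i := fun i => div_nonneg (abs_nonneg _) (hδpos i).le
  have hti : ∀ i, t i ≤ 1 / m := by
    intro i
    rw [htdef]
    rw [div_le_div_iff₀ (hδpos i) hmpos]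
    have := hyi i
    calc |y i - x i| * m ≤ (δ i / m) * m := by
          exact mul_le_mul_of_nonneg_right this hmpos.le
      _ = δ i := by field_simp
      _ ≤ 1 * δ i := by linarith [(hδpos i).le]
  have hsum : ∑ i, t i ≤ 1 := by
    calc ∑ i, t i ≤ ∑ _i : Fin m, 1 / (m:ℝ) := Finset.sum_le_sum (fun i _ => hti i)
      _ = m * (1 / m) := by rw [Finset.sum_const]; simp [Finset.card_univ]
      _ = 1 := by field_simp
  set d : Fin m → (Fin m → ℝ) := fun i =>
    if 0 ≤ y i - x i then Pi.single i 1 else -(Pi.single i 1) with hddef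
  have hpmem : ∀ i, x + δ i • d i ∈ B := by
    intro i
    by_cases h : 0 ≤ y i - x i
    · rw [hddef]; simp only [if_pos h]
      exact hmemp i (δ i) ⟨(hδpos i).le, min_le_left _ _⟩
    · rw [hddef]; simp only [if_neg h]
      exact hmemn i (δ i) ⟨(hδpos i).le, min_le_right _ _⟩
  have hz : ∀ i, (t i * δ i) • d i = Pi.single i (y i - x i) := by
    intro i
    have htd : t i * δ i = |y i - x i| := by
      simp only [htdef]; exact div_mul_cancel₀ _ (hδpos i).ne'
    by_cases h : 0 ≤ y i - x i
    · rw [hddef]; simp only [if_pos h]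
      rw [htd, abs_of_nonneg h]
      funext j
      simp [Pi.single_apply]
    · rw [hddef]; simp only [if_neg h]
      rw [htd, abs_of_neg (not_le.mp h)]
      funext j
      simp [Pi.single_apply]
      split <;> ring
  -- convex combination
  set w : Option (Fin m) → ℝ := fun o => o.elim (1 - ∑ i, t i) t with hwdef
  set z : Option (Fin m) → (Fin m → ℝ) := fun o => o.elim x (fun i => x + δ i • d i) with hzdef
  have hmem : ∑ o : Option (Fin m), w o • z o ∈ B := by
    apply hB.sum_mem
    · rintro (_|i) _
      · simpa [hwdef] using hsum
      · exact htnonneg i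
    · rw [Fintype.sum_option]; simp [hwdef]
    · rintro (_|i) _
      · exact hx
      · exact hpmem i
  have hfinal : ∑ o : Option (Fin m), w o • z o = y := by
    rw [Fintype.sum_option]
    simp only [hwdef, hzdef, Option.elim]
    have h1 : ∀ i, t i • (x + δ i • d i) = t i • x + (t i * δ i) • d i := by
      intro i; rw [smul_add, smul_smul]
    rw [Finset.sum_congr rfl (fun i _ => h1 i), Finset.sum_add_distrib, ← Finset.sum_smul,
      Finset.sum_congr rfl (fun i _ => hz i)]
    have h2 : ∑ i, Pi.single i (y i - x i) = y - x := by
      have := Finset.univ_sum_single (y - x)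
      simpa using this
    rw [h2, sub_smul, one_smul]
    abel
  rwa [hfinal] at hmem

variable {X : Type*} [AddCommGroup X] [Module ℝ X]

lemma tauc_cont_linearMap {m : ℕ} (T : (Fin m → ℝ) →ₗ[ℝ] X) :
    letI : TopologicalSpace X := tauc X
    Continuous T := by
  letI : TopologicalSpace X := tauc X
  refine continuous_generateFrom_iff.mpr ?_
  rintro A ⟨hconv, hcor⟩
  apply core_isOpen (hconv.linear_preimage T)
  intro x hx d
  have hx' : T x ∈ cor A := by rw [hcor]; exact hx
  obtain ⟨δ, hδ, h⟩ := hx'.2 (T d)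
  exact ⟨δ, hδ, fun lam hlam => by
    simpa only [Set.mem_preimage, map_add, map_smul] using h lam hlam⟩

lemma functional_basic (f : X →ₗ[ℝ] ℝ) (a b : ℝ) :
    f ⁻¹' Set.Ioo a b ∈ {A : Set X | Convex ℝ A ∧ cor A = A} := by
  constructor
  · exact (convex_Ioo a b).linear_preimage f
  · apply Set.Subset.antisymm (fun y hy => hy.1)
    intro y hy
    refine ⟨hy, fun d => ?_⟩
    have h1 : a < f y := hy.1
    have h2 : f y < b := hy.2
    set c : ℝ := |f d| + 1 with hcdef
    have hc : 0 < c := by positivity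
    have hM : 0 < min (b - f y) (f y - a) := lt_min (by linarith) (by linarith)
    refine ⟨min (b - f y) (f y - a) / (2 * c), div_pos hM (by positivity), ?_⟩
    intro lam hlam
    have hbound : |lam * f d| ≤ min (b - f y) (f y - a) / 2 := by
      rw [abs_mul, abs_of_nonneg hlam.1]
      calc lam * |f d| ≤ (min (b - f y) (f y - a) / (2 * c)) * c := by
            exact mul_le_mul hlam.2 (by linarith [le_refl (|f d|)]) (abs_nonneg _)
              (div_nonneg hM.le (by positivity))
        _ = min (b - f y) (f y - a) / 2 := by field_simp
    have hm1 : min (b - f y) (f y - a) / 2 ≤ (b - f y) / 2 := by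
      apply div_le_div_of_nonneg_right (min_le_left _ _) (by norm_num)
    have hm2 : min (b - f y) (f y - a) / 2 ≤ (f y - a) / 2 := by
      apply div_le_div_of_nonneg_right (min_le_right _ _) (by norm_num)
    have hla := neg_abs_le (lam * f d)
    have hlb := le_abs_self (lam * f d)
    simp only [Set.mem_preimage, map_add, map_smul, smul_eq_mul, Set.mem_Ioo]
    constructor <;> linarith

lemma tauc_cont_functional (f : X →ₗ[ℝ] ℝ) :
    letI : TopologicalSpace X := tauc X
    Continuous f := by
  letI : TopologicalSpace X := tauc X
  rw [continuous_def]
  intro V hV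
  rw [isOpen_iff_forall_mem_open]
  intro x hx
  obtain ⟨ε, hε, hball⟩ := Metric.isOpen_iff.mp hV (f x) hx
  refine ⟨f ⁻¹' Set.Ioo (f x - ε) (f x + ε), ?_, ?_, ?_⟩
  · intro y hy
    apply hball
    rw [Metric.mem_ball, Real.dist_eq, abs_sub_lt_iff]
    exact ⟨by linarith [hy.2], by linarith [hy.1]⟩
  · exact TopologicalSpace.isOpen_generateFrom_of_mem (functional_basic f _ _)
  · simp [hε]

lemma bound_of_vonN {S : Set X}
    (hS : letI : TopologicalSpace X := tauc X; Bornology.IsVonNBounded ℝ S)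
    (f : X →ₗ[ℝ] ℝ) : ∃ C : ℝ, ∀ x ∈ S, |f x| ≤ C := by
  letI : TopologicalSpace X := tauc X
  have hU : f ⁻¹' Set.Ioo (-1 : ℝ) 1 ∈ nhds (0 : X) := by
    apply IsOpen.mem_nhds
    · exact TopologicalSpace.isOpen_generateFrom_of_mem (functional_basic f (-1) 1)
    · simp only [Set.mem_preimage, map_zero, Set.mem_Ioo]
      norm_num
  obtain ⟨a, ha⟩ := (hS hU).exists
  refine ⟨|a|, fun x hx => ?_⟩
  obtain ⟨u, hu, rfl⟩ := ha hx
  rw [map_smul, smul_eq_mul, abs_mul]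
  have hu1 : |f u| ≤ 1 := by
    rw [abs_le]
    exact ⟨hu.1.le, hu.2.le⟩
  calc |a| * |f u| ≤ |a| * 1 := mul_le_mul_of_nonneg_left hu1 (abs_nonneg a)
    _ = |a| := mul_one _


lemma bound_of_compact {S : Set X}
    (hS : letI : TopologicalSpace X := tauc X; IsCompact S)
    (f : X →ₗ[ℝ] ℝ) : ∃ C : ℝ, ∀ x ∈ S, |f x| ≤ C := by
  letI : TopologicalSpace X := tauc X
  have h1 : Bornology.IsBounded (f '' S) := (hS.image (tauc_cont_functional f)).isBounded
  obtain ⟨C, hC⟩ := isBounded_iff_forall_norm_le.mp h1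
  exact ⟨C, fun x hx => by simpa [Real.norm_eq_abs] using hC (f x) ⟨x, hx, rfl⟩⟩


lemma exists_fd_of_bounds {S : Set X}
    (h : ∀ f : X →ₗ[ℝ] ℝ, ∃ C : ℝ, ∀ x ∈ S, |f x| ≤ C) :
    ∃ Y : Submodule ℝ X, FiniteDimensional ℝ Y ∧ S ⊆ (Y : Set X) := by
  by_contra hcon
  push_neg at hcon
  obtain ⟨b, hbS, hbspan, hbli⟩ := exists_linearIndependent ℝ S
  have hbinf : b.Infinite := by
    intro hfin
    have h1 : FiniteDimensional ℝ (Submodule.span ℝ b) := FiniteDimensional.span_of_finite ℝ hfin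
    rw [hbspan] at h1
    apply hcon _ h1
    intro x hx
    exact Submodule.subset_span hx
  set e := hbinf.natEmbedding
  set v : ℕ → X := fun n => (e n : X) with hvdef
  have hvli : LinearIndependent ℝ v := hbli.comp e e.injective
  set B := Module.Basis.span hvli
  set g0 : Submodule.span ℝ (Set.range v) →ₗ[ℝ] ℝ := B.constr ℝ (fun n => (n : ℝ)) with hg0
  obtain ⟨g, hg⟩ := LinearMap.exists_extend g0
  have hgv : ∀ n : ℕ, g (v n) = n := by
    intro n
    have h1 : ((B n : Submodule.span ℝ (Set.range v)) : X) = v n := congrArg Subtype.val (Module.Basis.span_apply hvli n)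
    have h2 := LinearMap.congr_fun hg (B n)
    simp only [LinearMap.comp_apply, Submodule.coe_subtype] at h2
    rw [h1] at h2
    rw [h2, hg0, Module.Basis.constr_basis]
  obtain ⟨C, hC⟩ := h g
  obtain ⟨n, hn⟩ := exists_nat_gt C
  have hvS : v n ∈ S := hbS (e n).2
  have := hC (v n) hvS
  rw [hgv n] at this
  have : (n : ℝ) ≤ C := (le_abs_self _).trans this
  linarith


end HeineBorelAux

/-- `(X, τ_c)` has the Heine–Borel property: every `τ_c`-closed, von Neumann
bounded subset is `τ_c`-compact; moreover every `τ_c`-compact set lies in a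
finite-dimensional linear subspace of `X`. -/
theorem stmt16 (X : Type*) [AddCommGroup X] [Module ℝ X] :
    letI : TopologicalSpace X := tauc X
    (∀ S : Set X, IsClosed S → Bornology.IsVonNBounded ℝ S → IsCompact S) ∧
    (∀ S : Set X, IsCompact S →
      ∃ Y : Submodule ℝ X, FiniteDimensional ℝ Y ∧ S ⊆ (Y : Set X)) := by
  letI : TopologicalSpace X := tauc X
  refine ⟨?_, ?_⟩
  · intro S hclosed hbdd
    obtain ⟨Y, hY, hSY⟩ := exists_fd_of_bounds (fun f => bound_of_vonN hbdd f)
    haveI := hY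
    set m := Module.finrank ℝ Y with hm
    let bY : Module.Basis (Fin m) ℝ Y := Module.finBasis ℝ Y
    let T : (Fin m → ℝ) →ₗ[ℝ] X := Y.subtype.comp bY.equivFun.symm.toLinearMap
    have hTcont : Continuous T := tauc_cont_linearMap T
    have hgex : ∀ i : Fin m, ∃ g : X →ₗ[ℝ] ℝ,
        g.comp Y.subtype = (LinearMap.proj i).comp bY.equivFun.toLinearMap :=
      fun i => LinearMap.exists_extend _
    choose g hgY using hgex
    choose C hC using fun i => bound_of_vonN hbdd (g i)
    have hTk : ∀ (k : Fin m → ℝ) (i : Fin m), g i (T k) = k i := by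
      intro k i
      have h2 := LinearMap.congr_fun (hgY i) (bY.equivFun.symm k)
      simp only [LinearMap.comp_apply, Submodule.coe_subtype, LinearMap.proj_apply,
        LinearEquiv.coe_coe, LinearEquiv.apply_symm_apply] at h2
      exact h2
    set K := T ⁻¹' S with hKdef
    have hKclosed : IsClosed K := hclosed.preimage hTcont
    have hKbdd : Bornology.IsBounded K := by
      rw [isBounded_iff_forall_norm_le]
      refine ⟨∑ i, |C i|, fun k hk => ?_⟩
      rw [pi_norm_le_iff_of_nonneg (by positivity)]
      intro i
      rw [Real.norm_eq_abs, ← hTk k i]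
      exact (hC i _ hk).trans ((le_abs_self _).trans
        (Finset.single_le_sum (fun j _ => abs_nonneg (C j)) (Finset.mem_univ i)))
    have hKcompact : IsCompact K := Metric.isCompact_iff_isClosed_bounded.mpr ⟨hKclosed, hKbdd⟩
    have hSK : S = T '' K := by
      apply Set.Subset.antisymm
      · intro x hx
        have hTx : T (bY.equivFun ⟨x, hSY hx⟩) = x := by
          show Y.subtype (bY.equivFun.symm (bY.equivFun ⟨x, hSY hx⟩)) = x
          rw [LinearEquiv.symm_apply_apply]
          rfl
        exact ⟨bY.equivFun ⟨x, hSY hx⟩, by rw [Set.mem_preimage, hTx]; exact hx, hTx⟩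
      · rintro _ ⟨k, hk, rfl⟩; exact hk
    rw [hSK]
    exact hKcompact.image hTcont
  · exact fun S hS => exists_fd_of_bounds (fun f => bound_of_compact hS f)
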